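/- Let I ⊆ R = MvPolynomial (Fin N) ℂ be an M-graded ideal, let g ∈ R be a nonzero M-homogeneous polynomial of degree d, and let m ∈ M. Then Φ_g(D_0^{m+d}(I)) = Φ_g(D_0^{m+d}(I ∩ ⟨g⟩)) = D_0^m(I : g); explicitly, for every M-homogeneous polynomial q of degree m, the following are equivalent: (a) λ_q vanishes on the ideal quotient I : ⟨g⟩; (b) there exists an M-homogeneous p of degree m + d with λ_p vanishing on I and λ_q(f) = λ_p(g·f) for all f ∈ R; (c) there exists an M-homogeneous p of degree m + d with λ_p vanishing on I ∩ ⟨g⟩ and λ_q(f) = λ_p(g·f) for all f ∈ R. -/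

import Mathlib

open MvPolynomial

/-- The Macaulay pairing `λ_p(f) = ∑_α coeff(α,p) * coeff(α,f)`, as a linear functional. -/
noncomputable def lam {N : ℕ} (p : MvPolynomial (Fin N) ℂ) :
    MvPolynomial (Fin N) ℂ →ₗ[ℂ] ℂ where
  toFun f := ∑ α ∈ p.support, coeff α p * coeff α f
  map_add' f g := by simp [mul_add, Finset.sum_add_distrib]
  map_smul' c f := by
    simp [MvPolynomial.coeff_smul, Finset.mul_sum, mul_left_comm]

/-- An ideal is `M`-graded if it is generated by a set of `M`-homogeneous polynomials. -/
def IsMGraded {N : ℕ} {M : Type*} [AddCommGroup M] (w : Fin N → M)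
    (I : Ideal (MvPolynomial (Fin N) ℂ)) : Prop :=
  ∃ S : Set (MvPolynomial (Fin N) ℂ),
    (∀ s ∈ S, ∃ m : M, s.IsWeightedHomogeneous w m) ∧ I = Ideal.span S

namespace DualColonAux

variable {N : ℕ}

lemma lam_apply (p f : MvPolynomial (Fin N) ℂ) :
    lam p f = ∑ α ∈ p.support, coeff α p * coeff α f := rfl

lemma lam_eq_sum (p f : MvPolynomial (Fin N) ℂ) {T : Finset ((Fin N) →₀ ℕ)}
    (hT : p.support ⊆ T) :
    lam p f = ∑ α ∈ T, coeff α p * coeff α f := by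
  rw [lam_apply]
  exact Finset.sum_subset hT fun α _ hα => by
    rw [notMem_support_iff.mp hα, zero_mul]

/-- the maximal ideal at 0 -/
noncomputable def mI (N : ℕ) : Ideal (MvPolynomial (Fin N) ℂ) :=
  Ideal.span (Set.range MvPolynomial.X)

lemma degree_add' (a b : Fin N →₀ ℕ) : (a + b).degree = a.degree + b.degree := by
  simp [Finsupp.degree_eq_weight_one, map_add]

lemma degree_single_one (i : Fin N) : (Finsupp.single i 1 : Fin N →₀ ℕ).degree = 1 := by
  exact Finsupp.degree_single i 1

lemma monomial_mem_pow (D : ℕ) (α : Fin N →₀ ℕ) (h : D ≤ α.degree) :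
    monomial α (1:ℂ) ∈ (mI N) ^ D := by
  induction D generalizing α with
  | zero => simp
  | succ D ih =>
    have hα0 : α ≠ 0 := by
      intro h0
      rw [h0, map_zero] at h
      omega
    obtain ⟨i, hi⟩ : ∃ i, α i ≠ 0 := by
      by_contra hc
      push_neg at hc
      exact hα0 (Finsupp.ext fun i => hc i)
    have hle : Finsupp.single i 1 ≤ α := by
      rw [Finsupp.single_le_iff]
      omega
    set β := α - Finsupp.single i 1 with hβ
    have hβα : β + Finsupp.single i 1 = α := tsub_add_cancel_of_le hle
    have hdeg : β.degree + 1 = α.degree := by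
      rw [← hβα, degree_add', degree_single_one]
    have : monomial α (1:ℂ) = monomial β 1 * X i := by
      rw [X, monomial_mul, mul_one, hβα]
    rw [this, pow_succ]
    exact Ideal.mul_mem_mul (ih β (by omega)) (Ideal.subset_span ⟨i, rfl⟩)

lemma coeff_zero_of_mem_mI {b : MvPolynomial (Fin N) ℂ} (hb : b ∈ mI N) :
    coeff 0 b = 0 := by
  have hle : mI N ≤ RingHom.ker (constantCoeff (R := ℂ) (σ := Fin N)) := by
    rw [mI, Ideal.span_le]
    rintro _ ⟨i, rfl⟩
    simp [RingHom.mem_ker]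
  have := hle hb
  rw [RingHom.mem_ker, MvPolynomial.constantCoeff_eq] at this
  exact this

lemma coeff_eq_zero_of_mem_pow {E : ℕ} {v : MvPolynomial (Fin N) ℂ}
    (hv : v ∈ (mI N) ^ E) {α : Fin N →₀ ℕ} (hα : α.degree < E) : coeff α v = 0 := by
  induction E generalizing v α with
  | zero => omega
  | succ E ih =>
    rw [pow_succ] at hv
    have key : ∀ x : MvPolynomial (Fin N) ℂ, x ∈ (mI N) ^ E * (mI N) →
        ∀ β : Fin N →₀ ℕ, β.degree < E + 1 → coeff β x = 0 := by
      intro x hx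
      refine Submodule.mul_induction_on hx ?_ ?_
      · intro a ha b hb β hβ
        rw [coeff_mul]
        refine Finset.sum_eq_zero fun uv huv => ?_
        obtain ⟨u, v'⟩ := uv
        have huvs : u + v' = β := Finset.HasAntidiagonal.mem_antidiagonal.mp huv
        have hdeg : u.degree + v'.degree = β.degree := by
          rw [← huvs, degree_add']
        by_cases hu : u.degree < E
        · rw [ih ha hu, zero_mul]
        · have hv0 : v'.degree = 0 := by omega
          have : v' = 0 := (Finsupp.degree_eq_zero_iff v').mp hv0
          rw [this, coeff_zero_of_mem_mI hb, mul_zero]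
      · intro x y hx hy β hβ
        rw [coeff_add, hx β hβ, hy β hβ, add_zero]
    exact key v hv α hα

lemma lam_vanish_pow (q : MvPolynomial (Fin N) ℂ) {v : MvPolynomial (Fin N) ℂ}
    (hv : v ∈ (mI N) ^ (q.totalDegree + 1)) : lam q v = 0 := by
  rw [lam_apply]
  refine Finset.sum_eq_zero fun α hα => ?_
  have hdeg : α.degree ≤ q.totalDegree := le_totalDegree hα
  rw [coeff_eq_zero_of_mem_pow hv (by omega), mul_zero]


lemma key_colon (I : Ideal (MvPolynomial (Fin N) ℂ)) (g q : MvPolynomial (Fin N) ℂ)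
    (hq0 : ∀ f ∈ I.colon (Ideal.span {g}), lam q f = 0) :
    ∃ D : ℕ, ∀ f, g * f ∈ I + (mI N) ^ D → lam q f = 0 := by
  obtain ⟨k, hk⟩ := Ideal.exists_pow_inf_eq_pow_smul (mI N) (M := MvPolynomial (Fin N) ℂ ⧸ I)
    (Submodule.span (MvPolynomial (Fin N) ℂ) {Submodule.mkQ I g})
  set E := q.totalDegree + 1 with hE
  refine ⟨E + k, fun f hf => ?_⟩
  rw [Ideal.add_eq_sup] at hf
  obtain ⟨h, hh, u, hu, huh⟩ := Submodule.mem_sup.mp hf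
  have h1 : Submodule.mkQ I (g * f) ∈ (mI N) ^ (E + k) •
        (⊤ : Submodule (MvPolynomial (Fin N) ℂ) (MvPolynomial (Fin N) ℂ ⧸ I)) ⊓
      Submodule.span (MvPolynomial (Fin N) ℂ) {Submodule.mkQ I g} := by
    constructor
    · have e1 : Submodule.mkQ I (g * f) = Submodule.mkQ I u := by
        rw [← huh, map_add]
        have hz : Submodule.mkQ I h = 0 := (Submodule.Quotient.mk_eq_zero I).mpr hh
        rw [hz, zero_add]
      have e2 : Submodule.mkQ I u = u • Submodule.mkQ I (1 : MvPolynomial (Fin N) ℂ) := by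
        rw [← map_smul, smul_eq_mul, mul_one]
      rw [e1, e2]
      exact Submodule.smul_mem_smul hu Submodule.mem_top
    · have e3 : Submodule.mkQ I (g * f) = f • Submodule.mkQ I g := by
        rw [← map_smul, smul_eq_mul, mul_comm]
      rw [e3]
      exact Submodule.smul_mem _ f (Submodule.mem_span_singleton_self _)
  rw [hk (E + k) (by omega)] at h1
  have hEk : E + k - k = E := by omega
  rw [hEk] at h1
  have h2 : Submodule.mkQ I (g * f) ∈
      (mI N) ^ E • Submodule.span (MvPolynomial (Fin N) ℂ) {Submodule.mkQ I g} :=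
    Submodule.smul_mono le_rfl inf_le_right h1
  have h3 : ∀ x ∈ (mI N) ^ E • Submodule.span (MvPolynomial (Fin N) ℂ) {Submodule.mkQ I g},
      ∃ v ∈ (mI N) ^ E, x = Submodule.mkQ I (v * g) := by
    intro x hx
    refine Submodule.smul_induction_on hx ?_ ?_
    · intro r hr n hn
      obtain ⟨c, hc⟩ := Submodule.mem_span_singleton.mp hn
      refine ⟨r * c, Ideal.mul_mem_right c _ hr, ?_⟩
      rw [← hc, smul_smul, ← map_smul, smul_eq_mul, mul_assoc]
    · rintro x y ⟨v1, hv1, rfl⟩ ⟨v2, hv2, rfl⟩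
      exact ⟨v1 + v2, Ideal.add_mem _ hv1 hv2, by rw [← map_add, add_mul]⟩
  obtain ⟨v, hv, hveq⟩ := h3 _ h2
  have hfv : f - v ∈ I.colon (Ideal.span {g}) := by
    rw [Ideal.mem_colon_span_singleton]
    have hmem : g * f - v * g ∈ I := by
      rw [← Submodule.Quotient.mk_eq_zero I]
      have hz2 : Submodule.mkQ I (g * f - v * g) = 0 := by rw [map_sub, hveq, sub_self]
      exact hz2
    have heq : (f - v) * g = g * f - v * g := by ring
    rwa [heq]
  have hfin := hq0 _ hfv
  rw [map_sub, lam_vanish_pow q hv, sub_zero] at hfin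
  exact hfin


lemma exists_dual (J : Ideal (MvPolynomial (Fin N) ℂ)) (D : ℕ) (hJD : (mI N) ^ D ≤ J)
    (g q : MvPolynomial (Fin N) ℂ)
    (hq : ∀ f, g * f ∈ J → lam q f = 0) :
    ∃ p : MvPolynomial (Fin N) ℂ,
      (∀ f ∈ J, lam p f = 0) ∧ ∀ f, lam p (g * f) = lam q f := by
  classical
  set Jc : Submodule ℂ (MvPolynomial (Fin N) ℂ) := J.restrictScalars ℂ with hJc
  set μ : MvPolynomial (Fin N) ℂ →ₗ[ℂ] (MvPolynomial (Fin N) ℂ ⧸ Jc) :=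
    Jc.mkQ ∘ₗ (LinearMap.mulLeft ℂ g) with hμ
  have hμ_apply : ∀ f, μ f = Jc.mkQ (g * f) := fun f => rfl
  have hker : LinearMap.ker μ ≤ LinearMap.ker (lam q) := by
    intro f hf
    rw [LinearMap.mem_ker] at hf ⊢
    rw [hμ_apply, Submodule.mkQ_apply, Submodule.Quotient.mk_eq_zero] at hf
    exact hq f hf
  -- functional on the range of μ
  set ψ : (LinearMap.range μ) →ₗ[ℂ] ℂ :=
    (Submodule.liftQ (LinearMap.ker μ) (lam q) hker) ∘ₗ
      (LinearMap.quotKerEquivRange μ).symm.toLinearMap with hψ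
  obtain ⟨φ, hφ⟩ := LinearMap.exists_extend ψ
  have hφμ : ∀ f, φ (μ f) = lam q f := by
    intro f
    have h1 : μ f = (LinearMap.range μ).subtype ⟨μ f, LinearMap.mem_range_self μ f⟩ := rfl
    rw [h1, ← LinearMap.comp_apply, hφ, hψ]
    have h2 : (LinearMap.quotKerEquivRange μ).symm ⟨μ f, LinearMap.mem_range_self μ f⟩ =
        (LinearMap.ker μ).mkQ f := LinearMap.quotKerEquivRange_symm_apply_image μ f _
    rw [LinearMap.comp_apply, LinearEquiv.coe_coe, h2]
    rfl
  have hφJ : ∀ f ∈ J, φ (Jc.mkQ f) = 0 := by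
    intro f hf
    have : Jc.mkQ f = 0 := (Submodule.Quotient.mk_eq_zero Jc).mpr hf
    rw [this, map_zero]
  -- build the polynomial p
  set S : Finset (Fin N →₀ ℕ) := (Finsupp.finite_of_degree_le (σ := Fin N) D).toFinset with hS
  set c : (Fin N →₀ ℕ) → ℂ := fun α => φ (Jc.mkQ (monomial α 1)) with hc
  have hc0 : ∀ α : Fin N →₀ ℕ, α ∉ S → c α = 0 := by
    intro α hα
    have hd : D ≤ α.degree := by
      by_contra hcon
      exact hα (by simp [hS, Set.Finite.mem_toFinset]; omega)
    have : monomial α (1:ℂ) ∈ J := hJD (monomial_mem_pow D α hd)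
    have hz : Jc.mkQ (monomial α 1) = 0 := (Submodule.Quotient.mk_eq_zero Jc).mpr this
    show φ (Jc.mkQ (monomial α 1)) = 0
    rw [hz, map_zero]
  set p : MvPolynomial (Fin N) ℂ := ∑ α ∈ S, c α • monomial α 1 with hp
  have hcoeff : ∀ β, coeff β p = if β ∈ S then c β else 0 := by
    intro β
    rw [hp]
    rw [MvPolynomial.coeff_sum]
    simp only [MvPolynomial.coeff_smul, coeff_monomial, smul_eq_mul]
    rw [Finset.sum_congr rfl (fun α hα => by rw [mul_ite, mul_one, mul_zero])]
    rw [Finset.sum_ite_eq' S β c]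
  have hsupp : p.support ⊆ S := by
    intro β hβ
    rw [mem_support_iff] at hβ
    by_contra hcon
    rw [hcoeff, if_neg hcon] at hβ
    exact hβ rfl
  have hlam : ∀ f, lam p f = φ (Jc.mkQ f) := by
    intro f
    rw [lam_eq_sum p f hsupp]
    have h1 : ∀ α ∈ S, coeff α p * coeff α f = c α * coeff α f := by
      intro α hα
      rw [hcoeff, if_pos hα]
    rw [Finset.sum_congr rfl h1]
    -- right side
    conv_rhs => rw [MvPolynomial.as_sum f]
    rw [map_sum, map_sum]
    have h2 : ∀ α ∈ f.support, φ (Jc.mkQ (monomial α (coeff α f))) = c α * coeff α f := by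
      intro α hα
      have : (monomial α (coeff α f) : MvPolynomial (Fin N) ℂ) = coeff α f • monomial α 1 := by
        rw [MvPolynomial.smul_monomial, smul_eq_mul, mul_one]
      rw [this, map_smul, map_smul, smul_eq_mul, hc, mul_comm]
    rw [Finset.sum_congr rfl h2]
    -- compare sums over S and f.support
    have e1 : ∑ x ∈ S, c x * coeff x f = ∑ x ∈ S ∪ f.support, c x * coeff x f :=
      Finset.sum_subset Finset.subset_union_left
        (fun α _ hα => by rw [hc0 α hα, zero_mul])
    have e2 : ∑ x ∈ f.support, c x * coeff x f = ∑ x ∈ S ∪ f.support, c x * coeff x f :=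
      Finset.sum_subset Finset.subset_union_right
        (fun α _ hα => by rw [notMem_support_iff.mp hα, mul_zero])
    rw [e1, e2]
  refine ⟨p, fun f hf => ?_, fun f => ?_⟩
  · rw [hlam, hφJ f hf]
  · rw [hlam, ← hμ_apply, hφμ]


section Homog

variable {M : Type*} [AddCommGroup M] [DecidableEq M] (w : Fin N → M)

lemma supp_whc (n : M) (p : MvPolynomial (Fin N) ℂ) :
    (weightedHomogeneousComponent w n p).support ⊆ p.support := by
  intro β hβ
  rw [mem_support_iff] at hβ ⊢
  rw [coeff_weightedHomogeneousComponent] at hβ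
  intro hcon
  rw [hcon] at hβ
  simp at hβ

lemma lam_whc (n : M) (p f : MvPolynomial (Fin N) ℂ) :
    lam (weightedHomogeneousComponent w n p) f = lam p (weightedHomogeneousComponent w n f) := by
  rw [lam_eq_sum _ f (supp_whc w n p), lam_apply]
  refine Finset.sum_congr rfl fun α _ => ?_
  rw [coeff_weightedHomogeneousComponent, coeff_weightedHomogeneousComponent]
  by_cases h : Finsupp.weight w α = n
  · rw [if_pos h, if_pos h]
  · rw [if_neg h, if_neg h, zero_mul, mul_zero]

lemma lam_of_homog {q : MvPolynomial (Fin N) ℂ} {m : M} (hq : q.IsWeightedHomogeneous w m)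
    (f : MvPolynomial (Fin N) ℂ) :
    lam q (weightedHomogeneousComponent w m f) = lam q f := by
  rw [lam_apply, lam_apply]
  refine Finset.sum_congr rfl fun α hα => ?_
  rw [coeff_weightedHomogeneousComponent, if_pos (hq (mem_support_iff.mp hα))]

lemma whc_mul_homog {g : MvPolynomial (Fin N) ℂ} {d : M} (hg : g.IsWeightedHomogeneous w d)
    (f : MvPolynomial (Fin N) ℂ) (n : M) :
    weightedHomogeneousComponent w n (g * f) =
      g * weightedHomogeneousComponent w (n - d) f := by
  ext β
  rw [coeff_weightedHomogeneousComponent, coeff_mul, coeff_mul]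
  have key : ∀ uv ∈ Finset.HasAntidiagonal.antidiagonal β,
      coeff (Prod.fst uv) g * coeff (Prod.snd uv) (weightedHomogeneousComponent w (n - d) f) =
      if Finsupp.weight w β = n then coeff (Prod.fst uv) g * coeff (Prod.snd uv) f else 0 := by
    rintro ⟨u, v⟩ huv
    have huvs : u + v = β := Finset.HasAntidiagonal.mem_antidiagonal.mp huv
    by_cases hu : coeff u g = 0
    · simp [hu]
    · have hdu : Finsupp.weight w u = d := hg hu
      have hwsum : Finsupp.weight w β = d + Finsupp.weight w v := by
        rw [← huvs, map_add, hdu]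
      rw [coeff_weightedHomogeneousComponent]
      by_cases hv : Finsupp.weight w v = n - d
      · rw [if_pos hv, if_pos (by rw [hwsum, hv]; abel)]
      · rw [if_neg hv, if_neg ?_, mul_zero]
        intro hcon
        apply hv
        rw [hwsum] at hcon
        rw [eq_sub_iff_add_eq, add_comm]
        exact hcon
  rw [Finset.sum_congr rfl key]
  by_cases hβ : Finsupp.weight w β = n
  · rw [if_pos hβ, Finset.sum_congr rfl (fun uv huv => if_pos hβ)]
  · rw [if_neg hβ, Finset.sum_congr rfl (fun uv huv => if_neg hβ), Finset.sum_const_zero]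

lemma graded_component_mem {I : Ideal (MvPolynomial (Fin N) ℂ)} (hI : IsMGraded w I)
    {f : MvPolynomial (Fin N) ℂ} (hf : f ∈ I) (n : M) :
    weightedHomogeneousComponent w n f ∈ I := by
  obtain ⟨S, hS, rfl⟩ := hI
  letI : GradedAlgebra (weightedHomogeneousSubmodule ℂ w) := weightedGradedAlgebra ℂ w
  have hhom : Ideal.IsHomogeneous (weightedHomogeneousSubmodule ℂ w) (Ideal.span S) := by
    refine Ideal.homogeneous_span _ S fun x hx => ?_
    obtain ⟨m, hm⟩ := hS x hx
    exact ⟨m, (mem_weightedHomogeneousSubmodule ℂ w m x).mpr hm⟩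
  have := hhom n hf
  have hdec : (DirectSum.decompose (weightedHomogeneousSubmodule ℂ w) f n :
      MvPolynomial (Fin N) ℂ) = weightedHomogeneousComponent w n f :=
    weightedDecomposition.decompose'_apply ℂ w f n
  rwa [hdec] at this

end Homog

end DualColonAux

/-- **Thm. 4.1(1)**: for an `M`-graded ideal `I`, a nonzero `M`-homogeneous `g` of degree
`d`, and `m ∈ M`, `Φ_g(D_0^{m+d}(I)) = Φ_g(D_0^{m+d}(I ∩ ⟨g⟩)) = D_0^m(I : g)`: for every
`M`-homogeneous `q` of degree `m`, (a) `λ_q` vanishes on `I : ⟨g⟩`; (b) `q = Φ_g(p)` for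
some `M`-homogeneous `p` of degree `m + d` with `λ_p` vanishing on `I`; and (c)
`q = Φ_g(p)` for some `M`-homogeneous `p` of degree `m + d` with `λ_p` vanishing on
`I ∩ ⟨g⟩`, are all equivalent. -/
theorem dualSpace_colon_polynomial {N : ℕ} {M : Type*} [AddCommGroup M] (w : Fin N → M)
    (I : Ideal (MvPolynomial (Fin N) ℂ)) (hI : IsMGraded w I)
    (g : MvPolynomial (Fin N) ℂ) (hg0 : g ≠ 0) (d : M)
    (hg : g.IsWeightedHomogeneous w d) (m : M)
    (q : MvPolynomial (Fin N) ℂ) (hq : q.IsWeightedHomogeneous w m) :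
    List.TFAE
      [ ∀ f ∈ I.colon (Ideal.span {g}), lam q f = 0,
        ∃ p : MvPolynomial (Fin N) ℂ, p.IsWeightedHomogeneous w (m + d) ∧
          (∀ f ∈ I, lam p f = 0) ∧ ∀ f : MvPolynomial (Fin N) ℂ, lam q f = lam p (g * f),
        ∃ p : MvPolynomial (Fin N) ℂ, p.IsWeightedHomogeneous w (m + d) ∧
          (∀ f ∈ I ⊓ Ideal.span {g}, lam p f = 0) ∧
          ∀ f : MvPolynomial (Fin N) ℂ, lam q f = lam p (g * f) ] := by
  classical
  tfae_have 2 → 3 := by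
    rintro ⟨p, hp1, hp2, hp3⟩
    exact ⟨p, hp1, fun f hf => hp2 f hf.1, hp3⟩
  tfae_have 3 → 1 := by
    rintro ⟨p, hp1, hp2, hp3⟩ f hf
    rw [hp3 f]
    refine hp2 _ ⟨?_, ?_⟩
    · have : f * g ∈ I := Ideal.mem_colon_span_singleton.mp hf
      rwa [mul_comm] at this
    · exact Ideal.mem_span_singleton.mpr (dvd_mul_right g f)
  tfae_have 1 → 2 := by
    intro h1
    obtain ⟨D, hD⟩ := DualColonAux.key_colon I g q h1
    set J := I + (DualColonAux.mI N) ^ D with hJ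
    have hIJ : I ≤ J := by rw [hJ, Ideal.add_eq_sup]; exact le_sup_left
    have hJD : (DualColonAux.mI N) ^ D ≤ J := by rw [hJ, Ideal.add_eq_sup]; exact le_sup_right
    obtain ⟨p', hp'J, hp'g⟩ := DualColonAux.exists_dual J D hJD g q (fun f hf => hD f hf)
    refine ⟨weightedHomogeneousComponent w (m + d) p',
      weightedHomogeneousComponent_isWeightedHomogeneous _ _, fun f hf => ?_, fun f => ?_⟩
    · rw [DualColonAux.lam_whc]
      exact hp'J _ (hIJ (DualColonAux.graded_component_mem w hI hf (m + d)))
    · have e : lam (weightedHomogeneousComponent w (m + d) p') (g * f) = lam q f := by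
        rw [DualColonAux.lam_whc, DualColonAux.whc_mul_homog w hg f (m + d), add_sub_cancel_right, hp'g,
          DualColonAux.lam_of_homog w hq f]
      exact e.symm
  tfae_finish
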